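/- arXiv:2004.01882 — 2 statements merged into one kernel-verified Lean document; each statement's English description precedes it below -/
import Mathlib

section
/- If h : ℝⁿ → ℝ is continuously differentiable and x : [0,∞) → ℝⁿ is a solution of the ODE x' = b(x) such that for all t, d/dt h(x(t)) ≥ -α(h(x(t))) for some locally Lipschitz extended class-K function α (strictly increasing, α(0)=0), and h(x(0)) ≥ 0, then h(x(t)) ≥ 0 for all t ≥ 0. -/
open Set

/-- Deterministic zeroing barrier function invariance: if `h` is C¹, `x` solves
`x' = b x`, `d/dt h(x t) ≥ -α (h (x t))` for a locally Lipschitz extended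
class-K function `α`, and `h (x 0) ≥ 0`, then `h (x t) ≥ 0` for all `t ≥ 0`. -/
theorem stmt0 {n : ℕ} (h : (Fin n → ℝ) → ℝ) (b : (Fin n → ℝ) → Fin n → ℝ)
    (x : ℝ → Fin n → ℝ) (α : ℝ → ℝ)
    (hh : ContDiff ℝ 1 h)
    (hαlip : LocallyLipschitz α) (hαmono : StrictMono α) (hα0 : α 0 = 0)
    (hode : ∀ t ≥ (0:ℝ), HasDerivAt x (b (x t)) t)
    (hineq : ∀ t ≥ (0:ℝ), deriv (fun s => h (x s)) t ≥ -α (h (x t)))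
    (h0 : h (x 0) ≥ 0) :
    ∀ t ≥ (0:ℝ), h (x t) ≥ 0 := by
  set y : ℝ → ℝ := fun s => h (x s) with hy
  have hdiff : ∀ s ≥ (0:ℝ), DifferentiableAt ℝ y s := by
    intro s hs
    exact (((hh.differentiable one_ne_zero) (x s)).comp s (hode s hs).differentiableAt)
  intro t ht
  by_contra hneg
  push_neg at hneg
  have hcont : ContinuousOn y (Icc 0 t) := fun s hs =>
    ((hdiff s hs.1).continuousAt).continuousWithinAt
  set S : Set ℝ := Icc 0 t ∩ y ⁻¹' Ici 0 with hS
  have hSne : S.Nonempty := ⟨0, ⟨le_rfl, ht⟩, h0⟩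
  have hSbdd : BddAbove S := BddAbove.mono (fun s hs => hs.1) (bddAbove_Icc)
  have hSclosed : IsClosed S :=
    hcont.preimage_isClosed_of_isClosed isClosed_Icc isClosed_Ici
  set t₀ : ℝ := sSup S with ht₀
  have ht₀S : t₀ ∈ S := hSclosed.csSup_mem hSne hSbdd
  have ht₀0 : (0:ℝ) ≤ t₀ := ht₀S.1.1
  have ht₀t : t₀ ≤ t := ht₀S.1.2
  have hyt₀ : 0 ≤ y t₀ := ht₀S.2
  have htS : t ∉ S := fun hmem => absurd hmem.2 (not_le.mpr hneg)
  have ht₀lt : t₀ < t := lt_of_le_of_ne ht₀t (fun he => htS (he ▸ ht₀S))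
  have hnegOn : ∀ s, t₀ < s → s ≤ t → y s < 0 := by
    intro s hs1 hs2
    by_contra hge
    push_neg at hge
    have : s ∈ S := ⟨⟨le_of_lt (lt_of_le_of_lt ht₀0 hs1), hs2⟩, hge⟩
    exact absurd (le_csSup hSbdd this) (not_le.mpr hs1)
  have hmono : StrictMonoOn y (Icc t₀ t) := by
    apply strictMonoOn_of_deriv_pos (convex_Icc t₀ t)
      (hcont.mono (Icc_subset_Icc ht₀0 le_rfl))
    intro s hs
    rw [interior_Icc] at hs
    have hs0 : (0:ℝ) ≤ s := le_of_lt (lt_of_le_of_lt ht₀0 hs.1)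
    have hys : y s < 0 := hnegOn s hs.1 hs.2.le
    have : α (y s) < 0 := by
      have := hαmono hys
      rwa [hα0] at this
    have hd := hineq s hs0
    calc (0:ℝ) < -α (y s) := by linarith
      _ ≤ deriv y s := hd
  have := hmono ⟨le_rfl, ht₀t⟩ ⟨ht₀t, le_rfl⟩ ht₀lt
  linarith [hneg, hyt₀]
end

section
/- Let α be an extended class-K function that is locally Lipschitz, and y : [0,∞) → ℝ differentiable with y' ≥ -α(y) and y(0) > 0. Then y(t) > 0 for all t ≥ 0, i.e., trajectories starting strictly inside the safe set {y ≥ 0} remain strictly inside for all time. -/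
open Set

/-- Strict barrier invariance: for `α` an extended class-K (continuous, strictly
increasing, `α 0 = 0`) locally Lipschitz function and `y` differentiable with
`y' ≥ -α (y)` and `y 0 > 0`, trajectories remain strictly positive for all `t ≥ 0`. -/
theorem stmt16 (α : ℝ → ℝ) (y y' : ℝ → ℝ)
    (hαcont : Continuous α) (hαmono : StrictMono α) (hα0 : α 0 = 0)
    (hαlip : LocallyLipschitz α)
    (hy : ∀ t ≥ (0:ℝ), HasDerivAt y (y' t) t)
    (hineq : ∀ t ≥ (0:ℝ), y' t ≥ -α (y t))
    (h0 : y 0 > 0) :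
    ∀ t ≥ (0:ℝ), y t > 0 := by
  by_contra h
  push_neg at h
  obtain ⟨tstar, htstar0, htstar⟩ := h
  have hyc : ∀ t ≥ (0:ℝ), ContinuousAt y t := fun t ht => (hy t ht).continuousAt
  -- the set of "bad" times in [0, tstar]
  set S : Set ℝ := Icc 0 tstar ∩ y ⁻¹' (Iic 0) with hS
  have hScont : ContinuousOn y (Icc 0 tstar) := fun x hx =>
    (hyc x hx.1).continuousWithinAt
  have hSclosed : IsClosed S :=
    hScont.preimage_isClosed_of_isClosed isClosed_Icc isClosed_Iic
  have hSne : S.Nonempty := ⟨tstar, ⟨htstar0, le_refl _⟩, htstar⟩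
  have hSbdd : BddBelow S := ⟨0, fun x hx => hx.1.1⟩
  set t₀ := sInf S with ht₀def
  have ht₀S : t₀ ∈ S := hSclosed.csInf_mem hSne hSbdd
  have ht₀0 : 0 ≤ t₀ := ht₀S.1.1
  have ht₀pos : 0 < t₀ := by
    rcases ht₀0.lt_or_eq with h' | h'
    · exact h'
    · exfalso; have h2 := ht₀S.2; simp only [mem_preimage, mem_Iic, ← h'] at h2
      exact absurd h2 (not_le.2 h0)
  -- y is positive strictly before t₀
  have hpos : ∀ s, 0 ≤ s → s < t₀ → 0 < y s := by
    intro s hs0 hst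
    by_contra hle
    push_neg at hle
    have hsS : s ∈ S := ⟨⟨hs0, hst.le.trans ht₀S.1.2⟩, hle⟩
    exact absurd (csInf_le hSbdd hsS) (not_le.2 hst)
  -- y t₀ = 0
  have hnb : (nhdsWithin t₀ (Ico 0 t₀)).NeBot := by
    rw [← mem_closure_iff_nhdsWithin_neBot, closure_Ico (ne_of_lt ht₀pos)]
    exact ⟨ht₀0, le_refl _⟩
  have hyt₀ : y t₀ = 0 := by
    refine le_antisymm ht₀S.2 ?_
    have h1 : Filter.Tendsto y (nhdsWithin t₀ (Ico 0 t₀)) (nhds (y t₀)) :=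
      ((hyc t₀ ht₀0).continuousWithinAt)
    refine ge_of_tendsto h1 ?_
    filter_upwards [self_mem_nhdsWithin] with s hs
    exact (hpos s hs.1 hs.2).le
  -- Lipschitz constant for α near 0
  obtain ⟨K, U, hU, hlip⟩ := hαlip 0
  obtain ⟨δ, hδpos, hδU⟩ := Metric.nhds_basis_closedBall.mem_iff.1 hU
  have h0U : (0:ℝ) ∈ U := hδU (Metric.mem_closedBall_self hδpos.le)
  -- key bound: α z ≤ K * z for 0 ≤ z ≤ δ
  have hbound : ∀ z, 0 ≤ z → z ≤ δ → α z ≤ (K : ℝ) * z := by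
    intro z hz0 hzδ
    have hzU : z ∈ U := hδU (by simp [Metric.mem_closedBall, abs_of_nonneg hz0, hzδ])
    have := hlip.dist_le_mul z hzU 0 h0U
    rw [Real.dist_eq, Real.dist_eq, hα0, sub_zero, sub_zero, abs_of_nonneg hz0] at this
    exact (le_abs_self _).trans this
  -- choose τ < t₀ with y τ > 0 and 0 ≤ y s ≤ δ on [τ, t₀]
  obtain ⟨τ, hτ0, hτlt, hτpos, hτbnd⟩ :
      ∃ τ, 0 ≤ τ ∧ τ < t₀ ∧ 0 < y τ ∧ ∀ s ∈ Icc τ t₀, 0 ≤ y s ∧ y s ≤ δ := by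
    set A : Set ℝ := Icc 0 t₀ ∩ y ⁻¹' (Ici δ) with hA
    by_cases hAne : A.Nonempty
    · have hAcont : ContinuousOn y (Icc 0 t₀) := fun x hx => (hyc x hx.1).continuousWithinAt
      have hAclosed : IsClosed A :=
        hAcont.preimage_isClosed_of_isClosed isClosed_Icc isClosed_Ici
      have hAbdd : BddAbove A := ⟨t₀, fun x hx => hx.1.2⟩
      set τ := sSup A with hτdef
      have hτA : τ ∈ A := hAclosed.csSup_mem hAne hAbdd
      have hτ0 : 0 ≤ τ := hτA.1.1
      have hτlt : τ < t₀ := by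
        rcases hτA.1.2.lt_or_eq with h' | h'
        · exact h'
        · exfalso
          have := hτA.2
          rw [mem_preimage, mem_Ici, h', hyt₀] at this
          exact absurd this (not_le.2 hδpos)
      have hlt : ∀ s, τ < s → s ≤ t₀ → y s < δ := by
        intro s hτs hst
        by_contra hge
        push_neg at hge
        have : s ∈ A := ⟨⟨hτ0.trans hτs.le, hst⟩, hge⟩
        exact absurd (le_csSup hAbdd this) (not_le.2 hτs)
      have hyτδ : y τ ≤ δ := by
        have hnb2 : (nhdsWithin τ (Ioc τ t₀)).NeBot := by
          rw [← mem_closure_iff_nhdsWithin_neBot, closure_Ioc (ne_of_lt hτlt)]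
          exact ⟨le_refl _, hτlt.le⟩
        have h1 : Filter.Tendsto y (nhdsWithin τ (Ioc τ t₀)) (nhds (y τ)) :=
          ((hyc τ hτ0).continuousWithinAt)
        refine le_of_tendsto h1 ?_
        filter_upwards [self_mem_nhdsWithin] with s hs
        exact (hlt s hs.1 hs.2).le
      refine ⟨τ, hτ0, hτlt, lt_of_lt_of_le hδpos hτA.2, ?_⟩
      intro s hs
      rcases eq_or_lt_of_le hs.1 with h' | h'
      · exact ⟨(hδpos.trans_le hτA.2).le.trans (h' ▸ le_refl _), h' ▸ hyτδ⟩
      · constructor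
        · rcases hs.2.lt_or_eq with h'' | h''
          · exact (hpos s (hτ0.trans hs.1) h'').le
          · rw [h'', hyt₀]
        · exact (hlt s h' hs.2).le
    · refine ⟨0, le_refl _, ht₀pos, h0, ?_⟩
      intro s hs
      have hsδ : y s < δ := by
        by_contra hge
        push_neg at hge
        exact hAne ⟨s, hs, hge⟩
      refine ⟨?_, hsδ.le⟩
      rcases hs.2.lt_or_eq with h'' | h''
      · exact (hpos s hs.1 h'').le
      · rw [h'', hyt₀]
  -- the auxiliary function g s = y s * exp (K * s) is monotone on [τ, t₀]
  set g : ℝ → ℝ := fun s => y s * Real.exp ((K : ℝ) * s) with hg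
  have hgderiv : ∀ s, 0 ≤ s → HasDerivAt g
      ((y' s + (K : ℝ) * y s) * Real.exp ((K : ℝ) * s)) s := by
    intro s hs
    have h1 : HasDerivAt (fun s => Real.exp ((K : ℝ) * s))
        ((K : ℝ) * Real.exp ((K : ℝ) * s)) s := by
      have := (Real.hasDerivAt_exp ((K : ℝ) * s)).comp s ((hasDerivAt_id s).const_mul (K : ℝ))
      simpa [Function.comp_def, mul_comm] using this
    have := (hy s hs).mul h1
    convert this using 1
    exacts [rfl, rfl, rfl, by ring]
  have hmono : MonotoneOn g (Icc τ t₀) := by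
    apply monotoneOn_of_deriv_nonneg (convex_Icc τ t₀)
    · intro x hx
      exact (hgderiv x (hτ0.trans hx.1)).continuousAt.continuousWithinAt
    · intro x hx
      rw [interior_Icc] at hx
      exact ((hgderiv x (hτ0.trans hx.1.le)).differentiableAt).differentiableWithinAt
    · intro x hx
      rw [interior_Icc] at hx
      have hx0 : 0 ≤ x := hτ0.trans hx.1.le
      rw [(hgderiv x hx0).deriv]
      have hxb := hτbnd x ⟨hx.1.le, hx.2.le⟩
      have h1 : α (y x) ≤ (K : ℝ) * y x := hbound _ hxb.1 hxb.2
      have h2 : y' x ≥ -((K : ℝ) * y x) := le_trans (neg_le_neg h1) (hineq x hx0)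
      have : 0 ≤ y' x + (K : ℝ) * y x := by linarith
      positivity
  have h1 : g τ ≤ g t₀ := hmono ⟨le_refl _, hτlt.le⟩ ⟨hτlt.le, le_refl _⟩ hτlt.le
  have h2 : 0 < g τ := mul_pos hτpos (Real.exp_pos _)
  have h3 : g t₀ = 0 := by simp [hg, hyt₀]
  linarith
end
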